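/- Let d be a positive integer, let a, b : Fin d → ℝ be Boolean vectors (each coordinate equal to 0 or 1), and define plane curves π, σ : Fin d → ℝ² by π_i = (3(i+1), 1 + 2·(a i)) and σ_i = (3(i+1), 2 − 2·(b i)). If ⟨a, b⟩ = 0 then max_{i} ‖π_i − σ_i‖ = 1, and if ⟨a, b⟩ ≠ 0 then max_{i} ‖π_i − σ_i‖ = 3. -/

import Mathlib

/-- **Cost of the diagonal traversal.**
For Boolean vectors `a, b : Fin d → ℝ` and the plane curves with vertices
`π i = (3(i+1), 1 + 2 * a i)` and `σ i = (3(i+1), 2 - 2 * b i)`, the maximum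
over all indices `i` of `‖π i - σ i‖` equals `1` if `⟨a, b⟩ = 0` and `3` otherwise. -/
theorem diagonal_traversal_cost (d : ℕ) (hd : 0 < d) (a b : Fin d → ℝ)
    (ha : ∀ i, a i = 0 ∨ a i = 1) (hb : ∀ i, b i = 0 ∨ b i = 1)
    (π σ : Fin d → EuclideanSpace ℝ (Fin 2))
    (hπ : ∀ i, π i = ![3 * (((i : ℕ) : ℝ) + 1), 1 + 2 * a i])
    (hσ : ∀ i, σ i = ![3 * (((i : ℕ) : ℝ) + 1), 2 - 2 * b i]) :
    ((∑ i, a i * b i) = 0 →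
      Finset.univ.sup' ⟨⟨0, hd⟩, Finset.mem_univ _⟩ (fun i => ‖π i - σ i‖) = 1) ∧
    ((∑ i, a i * b i) ≠ 0 →
      Finset.univ.sup' ⟨⟨0, hd⟩, Finset.mem_univ _⟩ (fun i => ‖π i - σ i‖) = 3) := by
  have hnorm : ∀ i, ‖π i - σ i‖ = |2 * a i + 2 * b i - 1| := by
    intro i
    rw [EuclideanSpace.norm_eq, Fin.sum_univ_two]
    simp only [PiLp.sub_apply, hπ, hσ]
    simp
    rw [← Real.sqrt_sq_eq_abs]
    congr 1
    ring
  have hval : ∀ i, ‖π i - σ i‖ = if a i * b i = 0 then 1 else 3 := by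
    intro i
    rw [hnorm i]
    rcases ha i with h1 | h1 <;> rcases hb i with h2 | h2 <;>
      simp [h1, h2] <;> norm_num [abs_of_nonneg, abs_of_nonpos]
  constructor
  · intro hsum
    have hall : ∀ i : Fin d, a i * b i = 0 := by
      intro i
      have hnn : ∀ j ∈ Finset.univ, 0 ≤ a j * b j := by
        intro j _
        rcases ha j with h1 | h1 <;> rcases hb j with h2 | h2 <;> simp [h1, h2]
      exact (Finset.sum_eq_zero_iff_of_nonneg hnn).1 hsum i (Finset.mem_univ i)
    apply le_antisymm
    · apply Finset.sup'_le
      intro i _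
      rw [hval i, if_pos (hall i)]
    · refine le_trans ?_ (Finset.le_sup' (fun i => ‖π i - σ i‖) (Finset.mem_univ ⟨0, hd⟩))
      rw [hval, if_pos (hall _)]
  · intro hsum
    obtain ⟨i, hi⟩ : ∃ i : Fin d, a i * b i ≠ 0 := by
      by_contra h
      push_neg at h
      exact hsum (Finset.sum_eq_zero fun i _ => h i)
    apply le_antisymm
    · apply Finset.sup'_le
      intro j _
      rw [hval j]
      split <;> norm_num
    · refine le_trans ?_ (Finset.le_sup' (fun i => ‖π i - σ i‖) (Finset.mem_univ i))
      rw [hval, if_neg hi]
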